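/- Let D ≥ 2 be a squarefree integer with D ≡ 2 (mod 8), and let ℤ_K = ℤ[√D] be the ring of integers of K = ℚ(√D). Then the unit group (ℤ_K/4ℤ_K)ˣ is isomorphic to C₄ × C₂; moreover the class of 1 + √D in (ℤ_K/4ℤ_K)ˣ has order 4, the class of 1 + D has order 2, and these two classes together generate (ℤ_K/4ℤ_K)ˣ. -/
import Mathlib


open NumberField

@[ext] structure V4 where
  x : ZMod 4
  y : ZMod 4
deriving DecidableEq

instance : Fintype V4 :=
  Fintype.ofEquiv (ZMod 4 × ZMod 4)
    { toFun := fun p => ⟨p.1, p.2⟩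
      invFun := fun v => (v.x, v.y)
      left_inv := fun _ => rfl
      right_inv := fun _ => rfl }

instance : Add V4 := ⟨fun v w => ⟨v.x + w.x, v.y + w.y⟩⟩
instance : Neg V4 := ⟨fun v => ⟨-v.x, -v.y⟩⟩
instance : Mul V4 := ⟨fun v w => ⟨v.x * w.x + 2 * v.y * w.y, v.x * w.y + v.y * w.x⟩⟩
instance : Zero V4 := ⟨⟨0, 0⟩⟩
instance : One V4 := ⟨⟨1, 0⟩⟩

@[simp] lemma V4.add_x (a b : V4) : (a + b).x = a.x + b.x := rfl
@[simp] lemma V4.add_y (a b : V4) : (a + b).y = a.y + b.y := rfl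
@[simp] lemma V4.neg_x (a : V4) : (-a).x = -a.x := rfl
@[simp] lemma V4.neg_y (a : V4) : (-a).y = -a.y := rfl
@[simp] lemma V4.mul_x (a b : V4) : (a * b).x = a.x * b.x + 2 * a.y * b.y := rfl
@[simp] lemma V4.mul_y (a b : V4) : (a * b).y = a.x * b.y + a.y * b.x := rfl
@[simp] lemma V4.zero_x : (0 : V4).x = 0 := rfl
@[simp] lemma V4.zero_y : (0 : V4).y = 0 := rfl
@[simp] lemma V4.one_x : (1 : V4).x = 1 := rfl
@[simp] lemma V4.one_y : (1 : V4).y = 0 := rfl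

instance : CommRing V4 where
  add := (· + ·)
  zero := 0
  neg := (- ·)
  mul := (· * ·)
  one := 1
  nsmul := nsmulRec
  zsmul := zsmulRec
  add_assoc a b c := by ext <;> simp <;> ring
  zero_add a := by ext <;> simp
  add_zero a := by ext <;> simp
  add_comm a b := by ext <;> simp <;> ring
  neg_add_cancel a := by ext <;> simp
  mul_assoc a b c := by ext <;> simp <;> ring
  one_mul a := by ext <;> simp
  mul_one a := by ext <;> simp
  left_distrib a b c := by ext <;> simp <;> ring
  right_distrib a b c := by ext <;> simp <;> ring
  mul_comm a b := by ext <;> simp <;> ring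
  zero_mul a := by ext <;> simp
  mul_zero a := by ext <;> simp

def aV : V4ˣ := ⟨⟨1, 1⟩, ⟨3, 1⟩, by decide, by decide⟩
def bV : V4ˣ := ⟨⟨3, 0⟩, ⟨3, 0⟩, by decide, by decide⟩

lemma aV_pow_four : aV ^ 4 = 1 := by decide
lemma bV_pow_two : bV ^ 2 = 1 := by decide

lemma orderOf_aV : orderOf aV = 4 := by
  haveI : Fact (Nat.Prime 2) := ⟨by norm_num⟩
  have h := orderOf_eq_prime_pow (x := aV) (p := 2) (n := 1) (by decide) (by decide)
  simpa using h

lemma orderOf_bV : orderOf bV = 2 := by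
  haveI : Fact (Nat.Prime 2) := ⟨by norm_num⟩
  exact orderOf_eq_prime bV_pow_two (by decide)

def psiV : Multiplicative (ZMod 4) × Multiplicative (ZMod 2) →* V4ˣ where
  toFun p := aV ^ (Multiplicative.toAdd p.1).val * bV ^ (Multiplicative.toAdd p.2).val
  map_one' := by simp
  map_mul' p q := by
    have ha : ∀ u v : ZMod 4, aV ^ (u + v).val = aV ^ u.val * aV ^ v.val := by
      intro u v
      rw [ZMod.val_add, ← pow_eq_pow_mod _ aV_pow_four, pow_add]
    have hb : ∀ u v : ZMod 2, bV ^ (u + v).val = bV ^ u.val * bV ^ v.val := by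
      intro u v
      rw [ZMod.val_add, ← pow_eq_pow_mod _ bV_pow_two, pow_add]
    show aV ^ (Multiplicative.toAdd (p.1 * q.1)).val * bV ^ (Multiplicative.toAdd (p.2 * q.2)).val = _
    rw [toAdd_mul, toAdd_mul, ha, hb, mul_mul_mul_comm]

lemma gen_V : ∀ u : V4ˣ, ∃ i : Fin 4, ∃ j : Fin 2, aV ^ (i : ℕ) * bV ^ (j : ℕ) = u := by decide

lemma card_V4_units : Fintype.card V4ˣ = 8 := by decide

lemma psiV_bijective : Function.Bijective psiV := by
  rw [Fintype.bijective_iff_surjective_and_card]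
  constructor
  · intro u
    obtain ⟨i, j, h⟩ := gen_V u
    refine ⟨(Multiplicative.ofAdd ((i : ℕ) : ZMod 4), Multiplicative.ofAdd ((j : ℕ) : ZMod 2)), ?_⟩
    show aV ^ (((i:ℕ) : ZMod 4)).val * bV ^ (((j:ℕ) : ZMod 2)).val = u
    rw [ZMod.val_natCast, ZMod.val_natCast, Nat.mod_eq_of_lt i.2, Nat.mod_eq_of_lt j.2]
    exact h
  · simp [card_V4_units]

noncomputable def equivV : (Multiplicative (ZMod 4) × Multiplicative (ZMod 2)) ≃* V4ˣ :=
  MulEquiv.ofBijective psiV psiV_bijective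

lemma closure_V : Subgroup.closure {aV, bV} = (⊤ : Subgroup V4ˣ) := by
  rw [eq_top_iff]
  intro u _
  obtain ⟨i, j, h⟩ := gen_V u
  rw [← h]
  exact mul_mem (pow_mem (Subgroup.subset_closure (by simp)) _)
    (pow_mem (Subgroup.subset_closure (by simp)) _)


section fHom

variable {A : Type*} [CommRing A]

/-- The ring hom `V4 →+* A` sending `(x,y)` to `x + y σ`, for `σ` with `σ² = 2`. -/
def fHom [CharP A 4] (σ : A) (hσ2 : σ ^ 2 = 2) : V4 →+* A where
  toFun v := ZMod.castHom (dvd_refl 4) A v.x + ZMod.castHom (dvd_refl 4) A v.y * σ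
  map_one' := by simp
  map_zero' := by simp
  map_mul' v w := by
    simp only [V4.mul_x, V4.mul_y, map_add, map_mul, map_ofNat]
    linear_combination (-(ZMod.castHom (dvd_refl 4) A v.y * ZMod.castHom (dvd_refl 4) A w.y)) * hσ2
  map_add' v w := by
    simp only [V4.add_x, V4.add_y, map_add]
    ring

lemma fHom_apply [CharP A 4] (σ : A) (hσ2 : σ ^ 2 = 2) (v : V4) :
    fHom σ hσ2 v = ZMod.castHom (dvd_refl 4) A v.x + ZMod.castHom (dvd_refl 4) A v.y * σ := rfl

end fHom

set_option maxHeartbeats 1000000 in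
set_option synthInstance.maxHeartbeats 400000 in
/-- Let `D ≥ 2` be squarefree with `D ≡ 2 (mod 8)`, and `ℤ_K = ℤ[√D]` the ring of
integers of `K = ℚ(√D)`. Then `(ℤ_K/4ℤ_K)ˣ ≅ C₄ × C₂`; the class of `1 + √D` has
order `4`, the class of `1 + D` has order `2`, and these two classes generate
`(ℤ_K/4ℤ_K)ˣ`. -/
theorem stmt_10 (D : ℕ) (hD : Squarefree D) (hD2 : 2 ≤ D) (hD8 : D % 8 = 2)
    (K : Type*) [Field K] [NumberField K]
    (hdeg : Module.finrank ℚ K = 2)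
    (s : 𝓞 K) (hs : s ^ 2 = (D : 𝓞 K))
    (hZ : ∀ x : 𝓞 K, ∃ a b : ℤ, x = (a : 𝓞 K) + (b : 𝓞 K) * s) :
    Nonempty ((𝓞 K ⧸ Ideal.span {(4 : 𝓞 K)})ˣ ≃*
      Multiplicative (ZMod 4) × Multiplicative (ZMod 2)) ∧
    ∃ a b : (𝓞 K ⧸ Ideal.span {(4 : 𝓞 K)})ˣ,
      (a : 𝓞 K ⧸ Ideal.span {(4 : 𝓞 K)})
          = Ideal.Quotient.mk (Ideal.span {(4 : 𝓞 K)}) (1 + s) ∧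
      orderOf a = 4 ∧
      (b : 𝓞 K ⧸ Ideal.span {(4 : 𝓞 K)})
          = Ideal.Quotient.mk (Ideal.span {(4 : 𝓞 K)}) (1 + (D : 𝓞 K)) ∧
      orderOf b = 2 ∧
      Subgroup.closure {a, b} = (⊤ : Subgroup (𝓞 K ⧸ Ideal.span {(4 : 𝓞 K)})ˣ) := by
  classical
  obtain ⟨k, hk⟩ : ∃ k : ℕ, D = 8 * k + 2 := ⟨D / 8, by omega⟩
  -- linear independence of 1, s
  have L : ∀ m n : ℤ, (m : 𝓞 K) + (n : 𝓞 K) * s = 0 → m = 0 ∧ n = 0 := by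
    intro m n h
    rcases eq_or_ne n 0 with hn | hn
    · subst hn
      have hm : (m : 𝓞 K) = 0 := by push_cast at h; linear_combination h
      exact ⟨by exact_mod_cast hm, rfl⟩
    · exfalso
      have hm : (m : 𝓞 K) = -((n : 𝓞 K) * s) := eq_neg_of_add_eq_zero_left h
      have hsq : ((m ^ 2 : ℤ) : 𝓞 K) = ((n ^ 2 * (D : ℤ) : ℤ) : 𝓞 K) := by
        push_cast
        rw [hm, ← hs]
        ring
      have hint : m ^ 2 = n ^ 2 * (D : ℤ) := by exact_mod_cast hsq
      have hdvd : n ^ 2 ∣ m ^ 2 := ⟨(D : ℤ), hint⟩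
      obtain ⟨c, hc⟩ := (Int.pow_dvd_pow_iff two_ne_zero).mp hdvd
      have hDc : (D : ℤ) = c ^ 2 := by
        have h2 : n ^ 2 * c ^ 2 = n ^ 2 * (D : ℤ) := by rw [hc] at hint; linear_combination hint
        have := mul_left_cancel₀ (pow_ne_zero 2 hn) h2
        omega
      have h8 : ((c : ZMod 8)) ^ 2 = 2 := by
        have hD8' : ((D : ℕ) : ZMod 8) = 2 := by
          rw [← ZMod.natCast_mod, hD8]; norm_num
        have : (((D : ℤ)) : ZMod 8) = 2 := by exact_mod_cast hD8'
        rw [← this, hDc]; push_cast; ring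
      have hno : ∀ x : ZMod 8, x ^ 2 ≠ 2 := by decide
      exact hno _ h8
  -- divisibility by 4 componentwise
  have div4 : ∀ m n : ℤ, (4 : 𝓞 K) ∣ ((m : 𝓞 K) + (n : 𝓞 K) * s) → 4 ∣ m ∧ 4 ∣ n := by
    intro m n hdvd
    obtain ⟨t, ht⟩ := hdvd
    obtain ⟨c, d, hcd⟩ := hZ t
    have h0 : ((m - 4 * c : ℤ) : 𝓞 K) + ((n - 4 * d : ℤ) : 𝓞 K) * s = 0 := by
      push_cast
      rw [hcd] at ht
      linear_combination ht
    obtain ⟨h1, h2⟩ := L _ _ h0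
    exact ⟨⟨c, by linarith⟩, ⟨d, by linarith⟩⟩
  have h4mem : (4 : 𝓞 K) ∈ Ideal.span {(4 : 𝓞 K)} := Ideal.mem_span_singleton_self _
  have h40 : Ideal.Quotient.mk (Ideal.span {(4 : 𝓞 K)}) (4 : 𝓞 K) = 0 :=
    Ideal.Quotient.eq_zero_iff_mem.mpr h4mem
  haveI hchar : CharP (𝓞 K ⧸ Ideal.span {(4 : 𝓞 K)}) 4 := by
    constructor
    intro x
    constructor
    · intro hx
      have hmem : ((x : ℕ) : 𝓞 K) ∈ Ideal.span {(4 : 𝓞 K)} := by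
        rw [← Ideal.Quotient.eq_zero_iff_mem, map_natCast]
        exact hx
      rw [Ideal.mem_span_singleton] at hmem
      have h4 : (4 : ℤ) ∣ (x : ℤ) := by
        refine (div4 (x : ℤ) 0 ?_).1
        push_cast
        simpa using hmem
      exact_mod_cast h4
    · rintro ⟨c, rfl⟩
      have h4R : (4 : 𝓞 K ⧸ Ideal.span {(4 : 𝓞 K)}) = 0 := by
        rw [← map_ofNat (Ideal.Quotient.mk (Ideal.span {(4 : 𝓞 K)})) 4]
        exact h40
      push_cast
      rw [h4R]
      ring
  set R := 𝓞 K ⧸ Ideal.span {(4 : 𝓞 K)} with hR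
  let χ : ZMod 4 →+* R := ZMod.castHom (dvd_refl 4) R
  let σ : R := Ideal.Quotient.mk (Ideal.span {(4 : 𝓞 K)}) s
  have hχ : ∀ a : ZMod 4, χ a = ((a.val : ℕ) : R) := by
    intro a
    conv_lhs => rw [← ZMod.natCast_rightInverse a]
    exact map_natCast χ a.val
  have hσ2 : σ ^ 2 = 2 := by
    show (Ideal.Quotient.mk (Ideal.span {(4 : 𝓞 K)}) s) ^ 2 = 2
    rw [← map_pow, hs, hk]
    push_cast
    rw [show ((8 : 𝓞 K) * k + 2 : 𝓞 K) = 4 * (2 * k) + 2 by ring, map_add, map_mul, h40,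
      zero_mul, zero_add]
    exact map_ofNat _ 2
  set f : V4 →+* R := fHom σ hσ2 with hf
  have hf_zero : ∀ v : V4, f v = 0 → v = 0 := by
    intro v hv
    rw [hf, fHom_apply] at hv
    have hv' : Ideal.Quotient.mk (Ideal.span {(4 : 𝓞 K)})
        (((v.x.val : ℤ) : 𝓞 K) + ((v.y.val : ℤ) : 𝓞 K) * s) = 0 := by
      rw [map_add, map_mul, map_intCast, map_intCast]
      rw [hχ, hχ] at hv
      push_cast
      push_cast at hv
      exact hv
    rw [Ideal.Quotient.eq_zero_iff_mem, Ideal.mem_span_singleton] at hv'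
    obtain ⟨hx4, hy4⟩ := div4 _ _ hv'
    have hx : v.x = 0 := by
      have : ((v.x.val : ℕ) : ZMod 4) = 0 := by
        rw [ZMod.natCast_eq_zero_iff]
        exact_mod_cast hx4
      rwa [ZMod.natCast_rightInverse v.x] at this
    have hy : v.y = 0 := by
      have : ((v.y.val : ℕ) : ZMod 4) = 0 := by
        rw [ZMod.natCast_eq_zero_iff]
        exact_mod_cast hy4
      rwa [ZMod.natCast_rightInverse v.y] at this
    ext
    · rw [hx]; rfl
    · rw [hy]; rfl
  have hf_inj : Function.Injective f := (injective_iff_map_eq_zero f).mpr hf_zero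
  have hf_surj : Function.Surjective f := by
    intro xq
    obtain ⟨y, hy⟩ := Ideal.Quotient.mk_surjective xq
    obtain ⟨p, q, hpq⟩ := hZ y
    refine ⟨⟨((p : ℤ) : ZMod 4), ((q : ℤ) : ZMod 4)⟩, ?_⟩
    rw [hf, fHom_apply]
    show χ ((p : ℤ) : ZMod 4) + χ ((q : ℤ) : ZMod 4) * σ = xq
    rw [map_intCast χ p, map_intCast χ q, ← hy, hpq, map_add, map_mul, map_intCast, map_intCast]
  let e : V4 ≃+* R := RingEquiv.ofBijective f ⟨hf_inj, hf_surj⟩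
  let uE : V4ˣ ≃* Rˣ := Units.mapEquiv e.toMulEquiv
  have he : ∀ v : V4, e v = f v := fun _ => rfl
  refine ⟨⟨uE.symm.trans equivV.symm⟩, uE aV, uE bV, ?_, ?_, ?_, ?_, ?_⟩
  · rw [Units.coe_mapEquiv]
    show e ((⟨1, 1⟩ : V4)) = _
    rw [he, hf, fHom_apply]
    show χ 1 + χ 1 * σ = _
    rw [map_one, map_add, map_one, one_mul]
  · exact (orderOf_injective uE.toMonoidHom uE.injective aV).trans orderOf_aV
  · rw [Units.coe_mapEquiv]
    show e ((⟨3, 0⟩ : V4)) = _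
    rw [he, hf, fHom_apply]
    show χ 3 + χ 0 * σ = _
    rw [map_zero, map_ofNat]
    have h3 : Ideal.Quotient.mk (Ideal.span {(4 : 𝓞 K)}) (1 + (D : 𝓞 K)) = 3 := by
      rw [hk]
      push_cast
      rw [show ((1 : 𝓞 K) + (8 * k + 2) : 𝓞 K) = 4 * (2 * k) + 3 by ring, map_add, map_mul, h40,
        zero_mul, zero_add]
      exact map_ofNat _ 3
    rw [h3]
    ring
  · exact (orderOf_injective uE.toMonoidHom uE.injective bV).trans orderOf_bV
  · have himg : (⇑uE.toMonoidHom) '' {aV, bV} = {uE aV, uE bV} := by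
      simp [Set.image_insert_eq]
    rw [← himg, ← MonoidHom.map_closure, closure_V]
    exact Subgroup.map_top_of_surjective _ uE.surjective
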